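/- If u, η are C² functions with β²h'' = (1 - u/√2)h where h := u - √2·η, u(x) < √2 for all x, and h(x) → 0 as |x| → ∞, then h ≡ 0 on ℝ. -/

import Mathlib

open Filter Topology Set

/-- At a global max of a twice-differentiable function, the second derivative is ≤ 0. -/
lemma secondderiv_nonpos_at_max (h : ℝ → ℝ) (hh : ContDiff ℝ 2 h) (x₀ : ℝ)
    (hmax : ∀ y, h y ≤ h x₀) : deriv (deriv h) x₀ ≤ 0 := by
  by_contra hpos
  push_neg at hpos
  have hd1 : Differentiable ℝ h := (hh.differentiable (by norm_num))
  have hd2 : Differentiable ℝ (deriv h) := by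
    have := (contDiff_succ_iff_deriv (n := 1)).mp (hh.of_le (by norm_num))
    exact this.2.2.differentiable (by norm_num)
  have h1 : deriv h x₀ = 0 := by
    have : IsLocalMax h x₀ := Filter.Eventually.of_forall hmax
    exact this.deriv_eq_zero
  have hda : HasDerivAt (deriv h) (deriv (deriv h) x₀) x₀ := (hd2 x₀).hasDerivAt
  have hslope := hasDerivAt_iff_tendsto_slope.mp hda
  have hev : ∀ᶠ x in 𝓝[>] x₀, 0 < slope (deriv h) x₀ x := by
    have : ∀ᶠ x in 𝓝[≠] x₀, 0 < slope (deriv h) x₀ x :=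
      hslope.eventually (eventually_gt_nhds hpos)
    exact this.filter_mono (nhdsWithin_mono _ (fun x hx => ne_of_gt hx))
  obtain ⟨b, hb, hsub⟩ := mem_nhdsGT_iff_exists_Ioo_subset.mp hev
  have hbx : x₀ < b := by
    rcases hb with hb
    simpa using hb
  have hderivpos : ∀ x ∈ Ioo x₀ b, 0 < deriv h x := by
    intro x hx
    have := hsub hx
    have hslp : 0 < (deriv h x - deriv h x₀) / (x - x₀) := by
      simpa [slope_def_field, div_eq_iff] using this
    rw [h1, sub_zero] at hslp
    have hx0 : 0 < x - x₀ := sub_pos.mpr hx.1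
    rcases div_pos_iff.mp hslp with ⟨ha, _⟩ | ⟨_, hb'⟩
    · exact ha
    · linarith
  have hmono : StrictMonoOn h (Icc x₀ b) := by
    apply strictMonoOn_of_deriv_pos (convex_Icc _ _) (hd1.continuous.continuousOn)
    intro x hx
    rw [interior_Icc] at hx
    exact hderivpos x hx
  have : h x₀ < h ((x₀ + b) / 2) := by
    apply hmono (left_mem_Icc.mpr hbx.le) ⟨by linarith, by linarith⟩
    linarith
  exact absurd (hmax ((x₀ + b) / 2)) (not_le.mpr this)

lemma aux_nonpos (β : ℝ) (hβ : 0 < β) (u h : ℝ → ℝ)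
    (hlt : ∀ x, u x < Real.sqrt 2) (hh : ContDiff ℝ 2 h)
    (heq : ∀ x, β^2 * deriv (deriv h) x = (1 - u x / Real.sqrt 2) * h x)
    (hh0 : Filter.Tendsto h (Filter.cocompact ℝ) (nhds 0)) :
    ∀ x, h x ≤ 0 := by
  by_contra hc
  push_neg at hc
  obtain ⟨y, hy⟩ := hc
  have hcont : Continuous h := hh.continuous
  have hev : ∀ᶠ x in cocompact ℝ, h x ≤ h y := by
    have := hh0.eventually (eventually_le_nhds hy)
    simpa using this
  obtain ⟨x₀, hx₀⟩ := hcont.exists_forall_ge' y hev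
  have hpos : 0 < h x₀ := lt_of_lt_of_le hy (hx₀ y)
  have h2 : deriv (deriv h) x₀ ≤ 0 := secondderiv_nonpos_at_max h hh x₀ hx₀
  have hcoef : 0 < 1 - u x₀ / Real.sqrt 2 := by
    have hs : 0 < Real.sqrt 2 := by positivity
    have := (div_lt_one hs).mpr (hlt x₀)
    linarith
  have := heq x₀
  nlinarith [sq_nonneg β, mul_pos hcoef hpos]

theorem stmt_6 (β : ℝ) (hβ : 0 < β)
    (u h : ℝ → ℝ)
    (hu : Continuous u) (hlt : ∀ x, u x < Real.sqrt 2)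
    (hh : ContDiff ℝ 2 h)
    (heq : ∀ x, β^2 * deriv (deriv h) x = (1 - u x / Real.sqrt 2) * h x)
    (hh0 : Filter.Tendsto h (Filter.cocompact ℝ) (nhds 0)) :
    ∀ x : ℝ, h x = 0 := by
  have h1 : ∀ x, h x ≤ 0 := aux_nonpos β hβ u h hlt hh heq hh0
  have h2 : ∀ x, -h x ≤ 0 := by
    apply aux_nonpos β hβ u (fun x => -h x) hlt hh.neg
    · intro x
      have hd : deriv (fun x => -h x) = fun x => -deriv h x := by
        funext z; simp [deriv.neg]
      rw [hd]
      have : deriv (fun x => -deriv h x) x = -deriv (deriv h) x := by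
        simp [deriv.neg]
      rw [this]
      have := heq x
      ring_nf
      ring_nf at this
      linarith
    · simpa using hh0.neg
  intro x
  exact le_antisymm (h1 x) (by linarith [h2 x])
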